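/- One-dimensional stabilization parameter formula: let m > 0, b > 0 and H > 0, and let B(x) = x/b − (H/b)·(e^{bx/m} − 1)/(e^{bH/m} − 1) be the solution of −m B'' + b B' = 1 on (0, H) with B(0) = B(H) = 0. Then the mean value of B satisfies (1/H) ∫_0^H B(x) dx = (H/(2b)) (coth(Pe) − 1/Pe), where Pe = bH/(2m). -/

import Mathlib

/-- One-dimensional stabilization parameter formula: for `m > 0`,
`b > 0`, `H > 0`, the residual-free bubble
`B(x) = x/b − (H/b)·(e^{bx/m} − 1)/(e^{bH/m} − 1)`
(the solution of `−m B'' + b B' = 1` on `(0,H)` with `B(0) = B(H) = 0`) has mean value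
`(1/H) ∫₀^H B = (H/(2b)) (coth(Pe) − 1/Pe)` with the element Péclet number
`Pe = bH/(2m)` (here `coth t = cosh t / sinh t`). -/
theorem one_dimensional_stabilization_parameter
    (m b H : ℝ) (hm : 0 < m) (hb : 0 < b) (hH : 0 < H)
    (B : ℝ → ℝ)
    (hBdef : ∀ x : ℝ, B x =
      x / b - (H / b) * ((Real.exp (b * x / m) - 1) / (Real.exp (b * H / m) - 1)))
    (Pe : ℝ) (hPe : Pe = b * H / (2 * m)) :
    (1 / H) * ∫ x in (0 : ℝ)..H, B x
      = (H / (2 * b)) * (Real.cosh Pe / Real.sinh Pe - 1 / Pe) := by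
  set k : ℝ := b / m with hk
  have hk0 : 0 < k := div_pos hb hm
  have hkx : ∀ x : ℝ, b * x / m = k * x := by
    intro x; rw [hk]; ring
  set E : ℝ := Real.exp (k * H) with hE
  have hE1 : 1 < E := by
    rw [hE]
    have : (0:ℝ) < k * H := mul_pos hk0 hH
    calc (1:ℝ) = Real.exp 0 := by simp
    _ < Real.exp (k * H) := Real.exp_lt_exp.mpr this
  have hEne : E - 1 ≠ 0 := by linarith
  set c : ℝ := (H / b) / (E - 1) with hc
  -- antiderivative
  set F : ℝ → ℝ := fun x => x ^ 2 / (2 * b) - c * (Real.exp (k * x) / k - x) with hF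
  have hderiv : ∀ x ∈ Set.uIcc (0:ℝ) H, HasDerivAt F (B x) x := by
    intro x _
    have h1 : HasDerivAt (fun x : ℝ => x ^ 2 / (2 * b)) (x / b) x := by
      have := (hasDerivAt_pow 2 x).div_const (2 * b)
      refine this.congr_deriv ?_
      norm_num; field_simp
    have h2 : HasDerivAt (fun x : ℝ => Real.exp (k * x) / k - x)
        (Real.exp (k * x) - 1) x := by
      have he : HasDerivAt (fun x : ℝ => Real.exp (k * x)) (Real.exp (k * x) * k) x := by
        have : HasDerivAt (fun x : ℝ => k * x) k x := by
          simpa using (hasDerivAt_id x).const_mul k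
        exact (Real.hasDerivAt_exp (k * x)).comp x this
      have := (he.div_const k).sub (hasDerivAt_id x)
      refine this.congr_deriv ?_
      field_simp
    have hBx : B x = x / b - c * (Real.exp (k * x) - 1) := by
      rw [hBdef x, hkx x, show b * H / m = k * H from hkx H, hc]
      ring
    rw [hBx]
    exact h1.sub (h2.const_mul c)
  have hcont : IntervalIntegrable B MeasureTheory.volume 0 H := by
    have : Continuous B := by
      have : B = fun x => x / b - (H / b) *
          ((Real.exp (b * x / m) - 1) / (Real.exp (b * H / m) - 1)) := funext hBdef
      rw [this]; continuity
    exact this.intervalIntegrable 0 H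
  have hint : (∫ x in (0:ℝ)..H, B x) = F H - F 0 :=
    intervalIntegral.integral_eq_sub_of_hasDerivAt hderiv hcont
  rw [hint]
  -- now algebra
  set e : ℝ := Real.exp Pe with he
  have he0 : 1 < e := by
    rw [he]
    have hPe0 : 0 < Pe := by rw [hPe]; positivity
    calc (1:ℝ) = Real.exp 0 := by simp
    _ < Real.exp Pe := Real.exp_lt_exp.mpr hPe0
  have hene : e ≠ 0 := by linarith
  have hEe : E = e * e := by
    rw [hE, he, ← Real.exp_add]
    congr 1
    rw [hPe, hk]; field_simp; ring
  have hPe0 : Pe ≠ 0 := by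
    rw [hPe]; positivity
  have hsinh : Real.sinh Pe = (e - e⁻¹) / 2 := by
    rw [Real.sinh_eq, he, Real.exp_neg]
  have hcosh : Real.cosh Pe = (e + e⁻¹) / 2 := by
    rw [Real.cosh_eq, he, Real.exp_neg]
  have hPeval : Pe = k * H / 2 := by rw [hPe, hk]; field_simp
  have hsne : e - e⁻¹ ≠ 0 := by
    have : e⁻¹ < 1 := by
      rw [inv_lt_one_iff₀]; right; exact he0
    intro h; nlinarith
  have hee : e * e - 1 ≠ 0 := by nlinarith
  have hk' : k = 2 * Pe / H := by
    rw [hPeval]; field_simp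
  rw [hF, hc, hsinh, hcosh]
  simp only [mul_zero, Real.exp_zero, ← hE, hEe]
  rw [hk']
  have hee2 : e ^ 2 - 1 ≠ 0 := by nlinarith
  field_simp
  ring
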